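/- For all positive integers m, s, all natural numbers n, r, and all complex numbers x, ξ, X, Ω, y, z, Y, Z: _LH_n^{(m,s)}(x,ξ,z|q) · _LH_r^{(m,s)}(X,Ω,Z|q) = Σ_{k=0}^{n} Σ_{p=0}^{r} [n choose k]_q [r choose p]_q (ξ ⊖_q y)^k (Ω ⊖_q Y)^p · _LH_{n-k}^{(m,s)}(x,y,z|q) · _LH_{r-p}^{(m,s)}(X,Y,Z|q). -/

import Mathlib

/-- The q-analogue of a natural number: [n]_q = Σ_{k=1}^n q^{k-1}. -/
noncomputable def qnat (q : ℝ) (n : ℕ) : ℝ := ∑ k ∈ Finset.range n, q ^ k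

/-- The q-factorial [n]_q! = Π_{k=1}^n [k]_q, with [0]_q! = 1. -/
noncomputable def qfact (q : ℝ) (n : ℕ) : ℝ := ∏ k ∈ Finset.range n, qnat q (k + 1)

/-- The Gaussian q-binomial coefficient [n choose k]_q. -/
noncomputable def qbinom (q : ℝ) (n k : ℕ) : ℝ := qfact q n / (qfact q k * qfact q (n - k))

/-- JHC q-subtraction power (x ⊖_q y)^n. -/
noncomputable def qsubPow (q : ℝ) (x y : ℂ) (n : ℕ) : ℂ :=
  ∑ k ∈ Finset.range (n + 1),
    (qbinom q n k : ℂ) * (q : ℂ) ^ (k * (k - 1) / 2) * x ^ (n - k) * (-y) ^ k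

/-- JHC q-addition power (x ⊕_q y)^n. -/
noncomputable def qaddPow (q : ℝ) (x y : ℂ) (n : ℕ) : ℂ :=
  ∑ k ∈ Finset.range (n + 1),
    (qbinom q n k : ℂ) * (q : ℂ) ^ (k * (k - 1) / 2) * x ^ (n - k) * y ^ k

/-- The q-deformed 2D Laguerre polynomial _mL_n(x,y|q). -/
noncomputable def qLag (q : ℝ) (m : ℕ) (x y : ℂ) (n : ℕ) : ℂ :=
  (qfact q n : ℂ) * ∑ k ∈ Finset.range (n / m + 1),
    (q : ℂ) ^ (m * (k * (k - 1) / 2)) * x ^ k * y ^ (n - m * k) /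
      ((qfact (q ^ m) k : ℂ) ^ 2 * (qfact q (n - m * k) : ℂ))

/-- The q-deformed Laguerre-Gould-Hopper polynomial _LH_n^{(m,s)}(x,y,z|q). -/
noncomputable def qLGH (q : ℝ) (m s : ℕ) (x y z : ℂ) (n : ℕ) : ℂ :=
  (qfact q n : ℂ) * ∑ k ∈ Finset.range (n / s + 1),
    (q : ℂ) ^ (s * (k * (k - 1) / 2)) * z ^ k * qLag q m x y (n - s * k) /
      ((qfact (q ^ s) k : ℂ) * (qfact q (n - s * k) : ℂ))

/-- The two-variable q-Gould-Hopper kernel G_n^s(u,v). -/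
noncomputable def qGH (q : ℝ) (s : ℕ) (u v : ℂ) (n : ℕ) : ℂ :=
  (qfact q n : ℂ) * ∑ k ∈ Finset.range (n / s + 1),
    (q : ℂ) ^ (s * (k * (k - 1) / 2)) * u ^ (n - s * k) * v ^ k /
      ((qfact q (n - s * k) : ℂ) * (qfact (q ^ s) k : ℂ))

/-- The kernel G_n^s(ξ ⊖_q y, ζ ⊖_q z), with monomial powers replaced by
JHC q-subtraction powers. -/
noncomputable def qGHsub (q : ℝ) (s : ℕ) (ξ y ζ z : ℂ) (n : ℕ) : ℂ :=
  (qfact q n : ℂ) * ∑ k ∈ Finset.range (n / s + 1),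
    (q : ℂ) ^ (s * (k * (k - 1) / 2)) * qsubPow q ξ y (n - s * k) * qsubPow q ζ z k /
      ((qfact q (n - s * k) : ℂ) * (qfact (q ^ s) k : ℂ))

lemma qnat_pos {q : ℝ} (hq : 0 < q) {n : ℕ} (hn : 0 < n) : 0 < qnat q n := by
  apply Finset.sum_pos (fun k _ => pow_pos hq k); simpa using hn.ne'
lemma qfact_pos {q : ℝ} (hq : 0 < q) (n : ℕ) : 0 < qfact q n :=
  Finset.prod_pos (fun k _ => qnat_pos hq k.succ_pos)
lemma qfact_ne {q : ℝ} (hq : 0 < q) (n : ℕ) : qfact q n ≠ 0 := (qfact_pos hq n).ne'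
lemma qnat_ne {q : ℝ} (hq : 0 < q) {n : ℕ} (hn : 0 < n) : qnat q n ≠ 0 := (qnat_pos hq hn).ne'
lemma qnat_add (q : ℝ) (a b : ℕ) : qnat q (a + b) = qnat q a + q ^ a * qnat q b := by
  simp only [qnat, Finset.sum_range_add, pow_add, Finset.mul_sum]
lemma qfact_succ (q : ℝ) (n : ℕ) : qfact q (n + 1) = qfact q n * qnat q (n + 1) :=
  Finset.prod_range_succ _ _
lemma qbinom_zero {q : ℝ} (hq : 0 < q) (n : ℕ) : qbinom q n 0 = 1 := by
  simp only [qbinom, Nat.sub_zero, show qfact q 0 = 1 from rfl, one_mul]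
  exact div_self (qfact_ne hq n)
lemma qbinom_self {q : ℝ} (hq : 0 < q) (n : ℕ) : qbinom q n n = 1 := by
  have : qfact q 0 = 1 := rfl
  simp [qbinom, this, div_self (qfact_ne hq n)]

lemma pascal1 {q : ℝ} (hq : 0 < q) (a c : ℕ) :
    qbinom q (a+c+2) (a+1) = qbinom q (a+c+1) a + q^(a+1) * qbinom q (a+c+1) (a+1) := by
  have h : qnat q (a+c+2) = qnat q (a+1) + q^(a+1) * qnat q (c+1) := by
    have := qnat_add q (a+1) (c+1); simpa [show a+1+(c+1) = a+c+2 from by omega] using this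
  simp only [qbinom, show a+c+2-(a+1) = c+1 from by omega, show a+c+1-a = c+1 from by omega,
    show a+c+1-(a+1) = c from by omega]
  rw [show a+c+2 = (a+c+1)+1 from rfl, qfact_succ, qfact_succ q a, qfact_succ q c]
  have h1 := qfact_ne hq a
  have h2 := qfact_ne hq c
  have h3 := qfact_ne hq (a+c+1)
  have h4 := qnat_ne hq (Nat.succ_pos a)
  have h5 := qnat_ne hq (Nat.succ_pos c)
  field_simp
  linear_combination h

lemma pascal2 {q : ℝ} (hq : 0 < q) (a c : ℕ) :
    qbinom q (a+c+2) (a+1) = qbinom q (a+c+1) (a+1) + q^(c+1) * qbinom q (a+c+1) a := by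
  have h : qnat q (a+c+2) = qnat q (c+1) + q^(c+1) * qnat q (a+1) := by
    have := qnat_add q (c+1) (a+1); simpa [show c+1+(a+1) = a+c+2 from by omega] using this
  simp only [qbinom, show a+c+2-(a+1) = c+1 from by omega, show a+c+1-a = c+1 from by omega,
    show a+c+1-(a+1) = c from by omega]
  rw [show a+c+2 = (a+c+1)+1 from rfl, qfact_succ, qfact_succ q a, qfact_succ q c]
  have h1 := qfact_ne hq a
  have h2 := qfact_ne hq c
  have h3 := qfact_ne hq (a+c+1)
  have h4 := qnat_ne hq (Nat.succ_pos a)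
  have h5 := qnat_ne hq (Nat.succ_pos c)
  field_simp
  linear_combination h

lemma qsubPow_zero {q : ℝ} (hq : 0 < q) (x y : ℂ) : qsubPow q x y 0 = 1 := by
  simp [qsubPow, qbinom_zero hq]

lemma tri (i : ℕ) : (i+1)*(i+1-1)/2 = i*(i-1)/2 + i := by
  have h1 := Nat.choose_two_right (i+1)
  have h2 := Nat.choose_two_right i
  have h3 : (i+1).choose 2 = i + i.choose 2 := by
    rw [Nat.choose_succ_succ, Nat.choose_one_right]
  simp only [Nat.add_sub_cancel] at h1 h2 ⊢
  omega

lemma qsubPow_succ {q : ℝ} (hq : 0 < q) (x y : ℂ) (k : ℕ) :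
    qsubPow q x y (k+1) = (x - (q:ℂ)^k * y) * qsubPow q x y k := by
  rw [qsubPow, qsubPow, Finset.sum_range_succ', Finset.sum_range_succ]
  rw [sub_mul, Finset.mul_sum, Finset.mul_sum, Finset.sum_range_succ', Finset.sum_range_succ]
  have hmid : ∀ i ∈ Finset.range k,
      (qbinom q (k+1) (i+1) : ℂ) * (q:ℂ) ^ ((i+1) * (i+1-1) / 2) * x ^ (k+1-(i+1)) * (-y) ^ (i+1)
      = x * ((qbinom q k (i+1) : ℂ) * (q:ℂ) ^ ((i+1) * (i+1-1) / 2) * x ^ (k-(i+1)) * (-y) ^ (i+1))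
        - (q:ℂ)^k * y * ((qbinom q k i : ℂ) * (q:ℂ) ^ (i * (i-1) / 2) * x ^ (k-i) * (-y) ^ i) := by
    intro i hi
    rw [Finset.mem_range] at hi
    obtain ⟨e, rfl⟩ := Nat.exists_eq_add_of_lt hi
    have hp := pascal2 hq i e
    have hp' : (qbinom q (i+e+2) (i+1) : ℂ)
        = (qbinom q (i+e+1) (i+1) : ℂ) + (q:ℂ)^(e+1) * (qbinom q (i+e+1) i : ℂ) := by
      rw [hp]; push_cast; ring
    rw [show i + e + 1 + 1 = i + e + 2 from rfl, hp',
      show i+e+2-(i+1) = e+1 from by omega, show i+e+1-(i+1) = e from by omega,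
      show i+e+1-i = e+1 from by omega, tri i,
      pow_add ((q:ℂ)) (i*(i-1)/2) i, show i+e+1 = (e+1)+i from by omega,
      pow_add ((q:ℂ)) (e+1) i, pow_succ x e]
    ring
  rw [Finset.sum_congr rfl hmid, Finset.sum_sub_distrib]
  simp only [qbinom_self hq, qbinom_zero hq, Complex.ofReal_one, Nat.sub_self, Nat.sub_zero,
    pow_zero, one_mul, mul_one]
  rw [tri k, pow_add ((q:ℂ)) (k*(k-1)/2) k, pow_succ x k]
  ring
lemma lemA {q : ℝ} (hq : 0 < q) (ξ y : ℂ) : ∀ N : ℕ,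
    ξ ^ N = ∑ k ∈ Finset.range (N+1), (qbinom q N k : ℂ) * qsubPow q ξ y k * y ^ (N-k) := by
  intro N
  induction N with
  | zero => simp [qbinom_zero hq, qsubPow_zero hq]
  | succ N ih =>
    -- RHS manipulation
    rw [Finset.sum_range_succ', Finset.sum_range_succ]
    have hmid : ∀ i ∈ Finset.range N,
        (qbinom q (N+1) (i+1) : ℂ) * qsubPow q ξ y (i+1) * y ^ (N+1-(i+1))
        = (qbinom q N i : ℂ) * qsubPow q ξ y (i+1) * y ^ (N-i)
          + (q:ℂ)^(i+1) * ((qbinom q N (i+1) : ℂ) * qsubPow q ξ y (i+1) * y ^ (N-i)) := by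
      intro i hi
      rw [Finset.mem_range] at hi
      obtain ⟨e, rfl⟩ := Nat.exists_eq_add_of_lt hi
      have hp := pascal1 hq i e
      have hp' : (qbinom q (i+e+2) (i+1) : ℂ)
          = (qbinom q (i+e+1) i : ℂ) + (q:ℂ)^(i+1) * (qbinom q (i+e+1) (i+1) : ℂ) := by
        rw [hp]; push_cast; ring
      rw [show i + e + 1 + 1 = i + e + 2 from rfl, hp',
        show i+e+2-(i+1) = e+1 from by omega, show i+e+1-i = e+1 from by omega]
      ring
    rw [Finset.sum_congr rfl hmid, Finset.sum_add_distrib]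
    simp only [qbinom_self hq, qbinom_zero hq, Complex.ofReal_one, Nat.sub_self, Nat.sub_zero,
      Nat.succ_sub_succ, pow_zero, one_mul, mul_one]
    -- LHS manipulation
    rw [pow_succ' ξ N, ih, Finset.mul_sum]
    have hmul : ∀ k ∈ Finset.range (N+1),
        ξ * ((qbinom q N k : ℂ) * qsubPow q ξ y k * y ^ (N-k))
        = (qbinom q N k : ℂ) * qsubPow q ξ y (k+1) * y ^ (N-k)
          + (q:ℂ)^k * ((qbinom q N k : ℂ) * qsubPow q ξ y k * y ^ (N+1-k)) := by
      intro k hk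
      rw [Finset.mem_range, Nat.lt_succ_iff] at hk
      rw [qsubPow_succ hq, show N+1-k = (N-k)+1 from by omega, pow_succ y (N-k)]
      ring
    rw [Finset.sum_congr rfl hmul, Finset.sum_add_distrib]
    -- peel: first sum peel last term; second sum peel first term
    rw [Finset.sum_range_succ (fun k => (qbinom q N k : ℂ) * qsubPow q ξ y (k+1) * y ^ (N-k)) N,
      Finset.sum_range_succ' (fun k => (q:ℂ)^k * ((qbinom q N k : ℂ) * qsubPow q ξ y k * y ^ (N+1-k))) N]
    simp only [qbinom_self hq, qbinom_zero hq, Complex.ofReal_one, Nat.sub_self, Nat.sub_zero,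
      Nat.succ_sub_succ, pow_zero, one_mul, mul_one, qsubPow_zero hq]
    ring
lemma swapSum {s : ℕ} (hs : 0 < s) (n : ℕ) (f : ℕ → ℕ → ℂ) :
    ∑ j ∈ Finset.range (n/s+1), ∑ k ∈ Finset.range (n - s*j + 1), f j k
    = ∑ k ∈ Finset.range (n+1), ∑ j ∈ Finset.range ((n-k)/s+1), f j k := by
  have hdiv : ∀ a j : ℕ, j ≤ a / s ↔ s * j ≤ a := by
    intro a j
    rw [Nat.le_div_iff_mul_le hs, Nat.mul_comm]
  have h1 : ∑ j ∈ Finset.range (n/s+1), ∑ k ∈ Finset.range (n - s*j + 1), f j k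
      = ∑ j ∈ Finset.range (n+1), ∑ k ∈ Finset.range (n+1),
          if s*j + k ≤ n then f j k else 0 := by
    have step1 : ∑ j ∈ Finset.range (n/s+1), ∑ k ∈ Finset.range (n - s*j + 1), f j k
        = ∑ j ∈ Finset.range (n/s+1), ∑ k ∈ Finset.range (n+1),
            if s*j + k ≤ n then f j k else 0 := by
      apply Finset.sum_congr rfl
      intro j hj
      rw [Finset.mem_range, Nat.lt_succ_iff, hdiv] at hj
      rw [← Finset.sum_subset (Finset.range_subset_range.mpr
          (show n - s*j + 1 ≤ n + 1 by omega))
          (fun k hk hk' => by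
            rw [Finset.mem_range, Nat.lt_succ_iff] at hk
            rw [Finset.mem_range, Nat.lt_succ_iff] at hk'
            exact if_neg (by omega))]
      apply Finset.sum_congr rfl
      intro k hk
      rw [Finset.mem_range, Nat.lt_succ_iff] at hk
      exact (if_pos (by omega)).symm
    rw [step1]
    apply Finset.sum_subset (Finset.range_subset_range.mpr
        (show n/s+1 ≤ n+1 by have := Nat.div_le_self n s; omega))
    intro j hj hj'
    rw [Finset.mem_range, Nat.lt_succ_iff] at hj
    rw [Finset.mem_range, Nat.lt_succ_iff, hdiv] at hj'
    exact Finset.sum_eq_zero (fun k hk => if_neg (by omega))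
  have h2 : ∑ k ∈ Finset.range (n+1), ∑ j ∈ Finset.range ((n-k)/s+1), f j k
      = ∑ k ∈ Finset.range (n+1), ∑ j ∈ Finset.range (n+1),
          if s*j + k ≤ n then f j k else 0 := by
    apply Finset.sum_congr rfl
    intro k hk
    rw [Finset.mem_range, Nat.lt_succ_iff] at hk
    rw [← Finset.sum_subset (Finset.range_subset_range.mpr
        (show (n-k)/s+1 ≤ n+1 by have := Nat.div_le_self (n-k) s; omega))
        (fun j hj hj' => by
          rw [Finset.mem_range, Nat.lt_succ_iff] at hj
          rw [Finset.mem_range, Nat.lt_succ_iff, hdiv] at hj'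
          exact if_neg (by omega))]
    apply Finset.sum_congr rfl
    intro j hj
    rw [Finset.mem_range, Nat.lt_succ_iff, hdiv] at hj
    exact (if_pos (by omega)).symm
  rw [h1, h2, Finset.sum_comm]

lemma coefId {q : ℝ} (hq : 0 < q) (k d e : ℕ) :
    qfact q (k+d+e) * qbinom q (k+e) k / qfact q (k+e)
    = qbinom q (k+d+e) k * qfact q (d+e) / qfact q e := by
  simp only [qbinom, show k+e-k = e from by omega, show k+d+e-k = d+e from by omega]
  have h1 := qfact_ne hq k
  have h2 := qfact_ne hq e
  have h3 := qfact_ne hq (d+e)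
  have h4 := qfact_ne hq (k+e)
  field_simp
lemma appell {q : ℝ} (hq : 0 < q) {s : ℕ} (hs : 0 < s) (c g h S : ℕ → ℂ)
    (hbin : ∀ N, g N = ∑ k ∈ Finset.range (N+1), (qbinom q N k : ℂ) * S k * h (N-k))
    (n : ℕ) :
    (qfact q n : ℂ) * ∑ j ∈ Finset.range (n/s+1), c j * g (n - s*j) / (qfact q (n - s*j) : ℂ)
    = ∑ k ∈ Finset.range (n+1), (qbinom q n k : ℂ) * S k *
        ((qfact q (n-k) : ℂ) * ∑ j ∈ Finset.range ((n-k)/s+1),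
          c j * h (n-k-s*j) / (qfact q (n-k-s*j) : ℂ)) := by
  have hdiv : ∀ a j : ℕ, j ≤ a / s ↔ s * j ≤ a := by
    intro a j
    rw [Nat.le_div_iff_mul_le hs, Nat.mul_comm]
  set f : ℕ → ℕ → ℂ := fun j k => (qbinom q n k : ℂ) * S k *
      ((qfact q (n-k) : ℂ) * (c j * h (n-k-s*j) / (qfact q (n-k-s*j) : ℂ))) with hf
  have hL : (qfact q n : ℂ) * ∑ j ∈ Finset.range (n/s+1),
      c j * g (n - s*j) / (qfact q (n - s*j) : ℂ)
      = ∑ j ∈ Finset.range (n/s+1), ∑ k ∈ Finset.range (n - s*j + 1), f j k := by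
    rw [Finset.mul_sum]
    apply Finset.sum_congr rfl
    intro j hj
    rw [Finset.mem_range, Nat.lt_succ_iff, hdiv] at hj
    rw [hbin (n - s*j), Finset.mul_sum, Finset.sum_div, Finset.mul_sum]
    apply Finset.sum_congr rfl
    intro k hk
    rw [Finset.mem_range, Nat.lt_succ_iff] at hk
    obtain ⟨e, he⟩ : ∃ e, n = k + s*j + e := ⟨n - k - s*j, by omega⟩
    subst he
    simp only [hf, show k + s*j + e - s*j = k + e from by omega,
      show k + s*j + e - k = s*j + e from by omega,
      show k + e - k = e from by omega,
      show s*j + e - s*j = e from by omega]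
    have hcoef : ((qfact q (k+s*j+e) * qbinom q (k+e) k / qfact q (k+e) : ℝ) : ℂ)
        = ((qbinom q (k+s*j+e) k * qfact q (s*j+e) / qfact q e : ℝ) : ℂ) := by
      rw [coefId hq k (s*j) e]
    push_cast at hcoef
    have h1 : (qfact q (k+e) : ℂ) ≠ 0 := by exact_mod_cast qfact_ne hq (k+e)
    have h2 : (qfact q e : ℂ) ≠ 0 := by exact_mod_cast qfact_ne hq e
    field_simp
    field_simp at hcoef
    linear_combination (c j * S k * h e) * hcoef
  have hR : ∑ k ∈ Finset.range (n+1), (qbinom q n k : ℂ) * S k *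
        ((qfact q (n-k) : ℂ) * ∑ j ∈ Finset.range ((n-k)/s+1),
          c j * h (n-k-s*j) / (qfact q (n-k-s*j) : ℂ))
      = ∑ k ∈ Finset.range (n+1), ∑ j ∈ Finset.range ((n-k)/s+1), f j k := by
    apply Finset.sum_congr rfl
    intro k _
    rw [Finset.mul_sum, Finset.mul_sum]
  rw [hL, hR, swapSum hs n f]
lemma lemB_qLag {q : ℝ} (hq : 0 < q) {m : ℕ} (hm : 0 < m) (x ξ y : ℂ) (n : ℕ) :
    qLag q m x ξ n = ∑ k ∈ Finset.range (n+1),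
      (qbinom q n k : ℂ) * qsubPow q ξ y k * qLag q m x y (n-k) := by
  have key := appell hq hm
      (fun j => (q:ℂ)^(m*(j*(j-1)/2)) * x^j / ((qfact (q^m) j : ℂ))^2)
      (fun N => ξ^N) (fun N => y^N) (qsubPow q ξ y) (fun N => lemA hq ξ y N) n
  have hL : qLag q m x ξ n
      = (qfact q n : ℂ) * ∑ j ∈ Finset.range (n/m+1),
          ((q:ℂ)^(m*(j*(j-1)/2)) * x^j / ((qfact (q^m) j : ℂ))^2) * ξ^(n - m*j)
            / (qfact q (n - m*j) : ℂ) := by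
    rw [qLag]
    congr 1
    apply Finset.sum_congr rfl
    intro j _
    ring
  rw [hL, key]
  apply Finset.sum_congr rfl
  intro k _
  congr 1
  rw [qLag]
  congr 1
  apply Finset.sum_congr rfl
  intro j _
  ring

lemma lemB_qLGH {q : ℝ} (hq : 0 < q) {m s : ℕ} (hm : 0 < m) (hs : 0 < s)
    (x ξ y z : ℂ) (n : ℕ) :
    qLGH q m s x ξ z n = ∑ k ∈ Finset.range (n+1),
      (qbinom q n k : ℂ) * qsubPow q ξ y k * qLGH q m s x y z (n-k) := by
  have key := appell hq hs
      (fun j => (q:ℂ)^(s*(j*(j-1)/2)) * z^j / (qfact (q^s) j : ℂ))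
      (fun N => qLag q m x ξ N) (fun N => qLag q m x y N) (qsubPow q ξ y)
      (fun N => lemB_qLag hq hm x ξ y N) n
  have hL : qLGH q m s x ξ z n
      = (qfact q n : ℂ) * ∑ j ∈ Finset.range (n/s+1),
          ((q:ℂ)^(s*(j*(j-1)/2)) * z^j / (qfact (q^s) j : ℂ)) * qLag q m x ξ (n - s*j)
            / (qfact q (n - s*j) : ℂ) := by
    rw [qLGH]
    congr 1
    apply Finset.sum_congr rfl
    intro j _
    ring
  rw [hL, key]
  apply Finset.sum_congr rfl
  intro k _
  congr 1
  rw [qLGH]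
  congr 1
  apply Finset.sum_congr rfl
  intro j _
  ring

theorem qLGH_product_formula_z (q : ℝ) (hq0 : 0 < q) (hq1 : q < 1)
    (m s : ℕ) (hm : 0 < m) (hs : 0 < s) (n r : ℕ)
    (x ξ X Ω y z Y Z : ℂ) :
    qLGH q m s x ξ z n * qLGH q m s X Ω Z r =
      ∑ k ∈ Finset.range (n + 1), ∑ p ∈ Finset.range (r + 1),
        (qbinom q n k : ℂ) * (qbinom q r p : ℂ) *
          qsubPow q ξ y k * qsubPow q Ω Y p *
          qLGH q m s x y z (n - k) * qLGH q m s X Y Z (r - p) := by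
  rw [lemB_qLGH hq0 hm hs x ξ y z n, lemB_qLGH hq0 hm hs X Ω Y Z r,
    Finset.sum_mul_sum]
  apply Finset.sum_congr rfl
  intro k _
  apply Finset.sum_congr rfl
  intro p _
  ring
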